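/- Let s₁, s₂ ∈ ℂ be nonzero and u ∈ ℂ. Define A = [[s₁, 1], [0, s₁⁻¹]], B = [[s₂, 0], [u, s₂⁻¹]], C = B·A·B⁻¹·A⁻¹, D = A⁻¹·B⁻¹·A·B, and set x = s₁ + s₁⁻¹, y = s₂ + s₂⁻¹, z = u + s₁s₂ + s₁⁻¹s₂⁻¹, v = tr(C). Let S : ℤ → ℂ satisfy S(0) = 1, S(1) = v, and S(k+1) = v·S(k) − S(k−1) for every integer k. Then for every natural number n, the (2,1) entry of the matrix Cⁿ·(B·A·B)·Dⁿ equals u · ( S(n) − S(n−1) ) · ( z·S(n) − (x·y − z)·S(n−1) ). (This realizes the Riley polynomial of the twisted Whitehead link W_{2n}, whose link group is ⟨a, b | aw = wa⟩ with w = (bab⁻¹a⁻¹)ⁿ bab (a⁻¹b⁻¹ab)ⁿ.) -/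

import Mathlib

set_option maxHeartbeats 1000000 in
theorem riley_polynomial_even_twisted_whitehead
    (s₁ s₂ u : ℂ) (hs₁ : s₁ ≠ 0) (hs₂ : s₂ ≠ 0)
    (A B C D : Matrix (Fin 2) (Fin 2) ℂ)
    (hA : A = !![s₁, 1; 0, s₁⁻¹]) (hB : B = !![s₂, 0; u, s₂⁻¹])
    (hC : C = B * A * B⁻¹ * A⁻¹) (hD : D = A⁻¹ * B⁻¹ * A * B)
    (x y z v : ℂ)
    (hx : x = s₁ + s₁⁻¹) (hy : y = s₂ + s₂⁻¹)
    (hz : z = u + s₁ * s₂ + s₁⁻¹ * s₂⁻¹)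
    (hv : v = Matrix.trace C)
    (S : ℤ → ℂ)
    (h0 : S 0 = 1) (h1 : S 1 = v)
    (hrec : ∀ k : ℤ, S (k + 1) = v * S k - S (k - 1)) :
    ∀ n : ℕ, (C ^ n * (B * A * B) * D ^ n) 1 0
      = u * (S n - S ((n : ℤ) - 1))
        * (z * S n - (x * y - z) * S ((n : ℤ) - 1)) := by
  have e₁ : s₁ * s₁⁻¹ = 1 := mul_inv_cancel₀ hs₁
  have e₂ : s₂ * s₂⁻¹ = 1 := mul_inv_cancel₀ hs₂
  have hAi : A⁻¹ = !![s₁⁻¹, -1; 0, s₁] := by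
    rw [hA]
    apply Matrix.inv_eq_right_inv
    ext i j
    fin_cases i <;> fin_cases j <;>
      simp [Matrix.mul_apply, Fin.sum_univ_two, Matrix.one_apply] <;>
      first | linear_combination e₁ | linear_combination -e₁ | ring
  have hBi : B⁻¹ = !![s₂⁻¹, 0; -u, s₂] := by
    rw [hB]
    apply Matrix.inv_eq_right_inv
    ext i j
    fin_cases i <;> fin_cases j <;>
      simp [Matrix.mul_apply, Fin.sum_univ_two, Matrix.one_apply] <;>
      first | linear_combination e₂ | linear_combination -e₂ | ring
  have hCf : C = !![1 + (-1)*s₁⁻¹*s₂*u, s₂*u + (-1)*s₁ + s₁*s₂^2;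
      s₂⁻¹*u + (-1)*s₁⁻¹*u^2 + (-1)*s₁⁻¹^2*s₂⁻¹*u, 1 + u^2 + s₁⁻¹*s₂⁻¹*u + (-1)*s₁*s₂⁻¹*u + s₁*s₂*u] := by
    rw [hC, hAi, hBi, hA, hB]
    ext i j
    fin_cases i <;> fin_cases j <;>
      simp [Matrix.mul_apply, Fin.sum_univ_two]
    · linear_combination (s₂*s₂⁻¹) * e₁ + (1) * e₂
    · linear_combination ((-1)*s₁) * e₂
    · linear_combination (s₂⁻¹*u) * e₁
    · linear_combination (s₂*s₂⁻¹) * e₁ + (1) * e₂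
  have hDf : D = !![1 + u^2 + s₁⁻¹*s₂⁻¹*u + (-1)*s₁⁻¹*s₂*u + s₁*s₂*u, s₂⁻¹*u + (-1)*s₁⁻¹ + s₁⁻¹*s₂⁻¹^2;
      s₂*u + (-1)*s₁*u^2 + (-1)*s₁^2*s₂*u, 1 + (-1)*s₁*s₂⁻¹*u] := by
    rw [hD, hAi, hBi, hA, hB]
    ext i j
    fin_cases i <;> fin_cases j <;>
      simp [Matrix.mul_apply, Fin.sum_univ_two]
    · linear_combination (s₂*s₂⁻¹) * e₁ + (1) * e₂
    · linear_combination ((-1)*s₁⁻¹) * e₂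
    · linear_combination (s₂*u) * e₁
    · linear_combination (s₂*s₂⁻¹) * e₁ + (1) * e₂
  have hdetA : A.det = 1 := by
    rw [hA, Matrix.det_fin_two_of]; field_simp; simp
  have hdetB : B.det = 1 := by
    rw [hB, Matrix.det_fin_two_of]; field_simp; simp
  have hdetC : C.det = 1 := by
    rw [hC, Matrix.det_mul, Matrix.det_mul, Matrix.det_mul,
      Matrix.det_nonsing_inv, Matrix.det_nonsing_inv, hdetA, hdetB]
    norm_num
  have hdetD : D.det = 1 := by
    rw [hD, Matrix.det_mul, Matrix.det_mul, Matrix.det_mul,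
      Matrix.det_nonsing_inv, Matrix.det_nonsing_inv, hdetA, hdetB]
    norm_num
  have htrD : Matrix.trace D = v := by
    rw [hv, hDf, hCf, Matrix.trace_fin_two]
    simp [Matrix.trace_fin_two]
    ring
  have CH : ∀ M : Matrix (Fin 2) (Fin 2) ℂ, M.det = 1 → Matrix.trace M = v →
      M * M = v • M - 1 := by
    intro M hdet htr
    rw [Matrix.det_fin_two] at hdet
    rw [Matrix.trace_fin_two] at htr
    ext i j
    fin_cases i <;> fin_cases j <;>
      simp [Matrix.mul_apply, Fin.sum_univ_two, Matrix.one_apply, ← htr] <;>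
      first
        | linear_combination -hdet
        | ring
  have hCH := CH C hdetC hv.symm
  have hDH := CH D hdetD htrD
  have Sm1 : S (-1) = 0 := by
    have h := hrec 0
    norm_num [h0, h1] at h
    linear_combination h
  have Sm2 : S (-2) = -1 := by
    have h := hrec (-1)
    norm_num [Sm1, h0] at h
    linear_combination h
  have hpow : ∀ M : Matrix (Fin 2) (Fin 2) ℂ, M * M = v • M - 1 →
      ∀ n : ℕ, M ^ n = S ((n : ℤ) - 1) • M - S ((n : ℤ) - 2) • 1 := by
    intro M hM n
    induction n with
    | zero =>
        norm_num [Sm1, Sm2]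
    | succ n ih =>
        have c1 : ((n + 1 : ℕ) : ℤ) - 1 = (n : ℤ) := by push_cast; ring
        have c2 : ((n + 1 : ℕ) : ℤ) - 2 = (n : ℤ) - 1 := by push_cast; ring
        have hn : S (n : ℤ) = v * S ((n : ℤ) - 1) - S ((n : ℤ) - 2) := by
          have h := hrec ((n : ℤ) - 1)
          rw [show ((n : ℤ) - 1) + 1 = (n : ℤ) by ring,
            show ((n : ℤ) - 1) - 1 = (n : ℤ) - 2 by ring] at h
          exact h
        rw [pow_succ, ih, c1, c2, sub_mul, Matrix.smul_mul, Matrix.smul_mul,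
          one_mul, hM, hn]
        module
  intro n
  have hn : S (n : ℤ) = v * S ((n : ℤ) - 1) - S ((n : ℤ) - 2) := by
    have h := hrec ((n : ℤ) - 1)
    rw [show ((n : ℤ) - 1) + 1 = (n : ℤ) by ring,
      show ((n : ℤ) - 1) - 1 = (n : ℤ) - 2 by ring] at h
    exact h
  have hvf : v = 2 + u^2 + s₁⁻¹*s₂⁻¹*u + (-1)*s₁⁻¹*s₂*u + (-1)*s₁*s₂⁻¹*u + s₁*s₂*u := by
    rw [hv, hCf, Matrix.trace_fin_two]
    simp
    ring
  rw [hpow C hCH n, hpow D hDH n, hn, hCf, hDf, hA, hB, hx, hy, hz, hvf]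
  set a := S ((n : ℤ) - 1) with ha
  set b := S ((n : ℤ) - 2) with hb
  simp [Matrix.mul_apply, Fin.sum_univ_two, Matrix.one_apply]
  linear_combination (2*s₂⁻¹^2*u^2*a^2 + (-4)*s₂*s₂⁻¹*u^2*a^2 + (-2)*s₂*s₂⁻¹^3*u^2*a^2 + 2*s₂^2*u^2*a^2 + 3*s₂^2*s₂⁻¹^2*u^2*a^2 + (-2)*s₂^3*s₂⁻¹*u^2*a^2 + s₁⁻¹*s₂^2*s₂⁻¹*u*a*b + (-1)*s₁⁻¹*s₂^2*s₂⁻¹*u*a^2 + (-1)*s₁⁻¹*s₂^2*s₂⁻¹*u^3*a^2 + (-1)*s₁⁻¹^2*s₂^2*s₂⁻¹^2*u^2*a^2 + s₁⁻¹^2*s₂^3*s₂⁻¹*u^2*a^2 + s₁*s₂*s₂⁻¹^2*u*a*b + (-1)*s₁*s₂*s₂⁻¹^2*u*a^2 + (-1)*s₁*s₂*s₂⁻¹^2*u^3*a^2 + (-1)*s₁*s₁⁻¹*s₂*s₂⁻¹^3*u^2*a^2 + s₁*s₁⁻¹*s₂^2*s₂⁻¹^2*u^2*a^2 + (-1)*s₁*s₁⁻¹*s₂^3*s₂⁻¹*u^2*a^2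 + s₁^2*s₂*s₂⁻¹^3*u^2*a^2 + (-1)*s₁^2*s₂^2*s₂⁻¹^2*u^2*a^2) * e₁ + ((-2)*u^2*a*b + 2*u^2*a^2 + 2*u^4*a^2 + (-2)*s₂⁻¹^2*u^2*a^2 + 4*s₂*s₂⁻¹*u^2*a^2 + (-2)*s₂^2*u^2*a^2 + (-1)*s₁⁻¹*s₂⁻¹*u*a*b + s₁⁻¹*s₂⁻¹*u*a^2 + 3*s₁⁻¹*s₂⁻¹*u^3*a^2 + s₁⁻¹*s₂*u*a*b + (-1)*s₁⁻¹*s₂*u*a^2 + (-3)*s₁⁻¹*s₂*u^3*a^2 + s₁⁻¹^2*s₂⁻¹^2*u^2*a^2 + (-2)*s₁⁻¹^2*s₂*s₂⁻¹*u^2*a^2 + s₁⁻¹^2*s₂^2*u^2*a^2 + s₁*s₂⁻¹*u*a*b + (-1)*s₁*s₂⁻¹*u*a^2 + (-3)*s₁*s₂⁻¹*u^3*a^2 + (-1)*s₁*s₂*u*a*b + s₁*s₂*u*a^2 + 3*s₁*s₂*u^3*a^2 + s₁^2*s₂⁻¹^2*u^2*a^2 + (-2)*s₁^2*s₂*s₂⁻¹*u^2*a^2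 + s₁^2*s₂^2*u^2*a^2) * e₂
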